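/- Let T be a tree with positive edge weights, no degree-2 vertices, and at least three leaves (n = |L(T)|). Let u, v be distinct leaves minimizing q(u,v) := (n−2)·d(u,v) − Σ_{x ∈ L(T)} d(u,x) − Σ_{x ∈ L(T)} d(v,x) over all pairs of distinct leaves. Then u and v form a cherry in T. -/

import Mathlib

open SimpleGraph Finset

noncomputable section

variable {V : Type*}

/-- The weight of a walk: sum of the weights of its edges. -/
def walkWeight {G : SimpleGraph V} (w : Sym2 V → ℝ) {x y : V} (p : G.Walk x y) : ℝ :=
  (p.edges.map w).sum

/-- The unique path between two vertices of a tree. -/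
noncomputable def tpath {G : SimpleGraph V} (hT : G.IsTree) (x y : V) : G.Walk x y :=
  (hT.existsUnique_path x y).choose

/-- The weighted distance between two vertices of a tree: the weight of the unique path. -/
noncomputable def tdist {G : SimpleGraph V} (hT : G.IsTree) (w : Sym2 V → ℝ) (x y : V) : ℝ :=
  walkWeight w (tpath hT x y)

/-- The distance from a vertex `x` to a path `p`: the minimum distance from `x`
to a vertex on `p`. -/
noncomputable def distToPath {G : SimpleGraph V} (hT : G.IsTree) (w : Sym2 V → ℝ)
    (x : V) {a b : V} (p : G.Walk a b) : ℝ :=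
  sInf {r | ∃ y ∈ p.support, r = tdist hT w x y}

/-- The set of leaves of a graph. -/
def leaves (G : SimpleGraph V) [Fintype V] [DecidableRel G.Adj] : Finset V :=
  Finset.univ.filter (fun v => G.degree v = 1)

/-- The leaf-status of a vertex: the sum of its distances to all leaves. -/
noncomputable def leafStatus {G : SimpleGraph V} [Fintype V] [DecidableRel G.Adj]
    (hT : G.IsTree) (w : Sym2 V → ℝ) (u : V) : ℝ :=
  ∑ x ∈ leaves G, tdist hT w u x

/-- The leaf-status of a path: the sum of the distances of all leaves to the path. -/
noncomputable def pathLeafStatus {G : SimpleGraph V} [Fintype V] [DecidableRel G.Adj]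
    (hT : G.IsTree) (w : Sym2 V → ℝ) {a b : V} (p : G.Walk a b) : ℝ :=
  ∑ x ∈ leaves G, distToPath hT w x p

/-- `Lside hT w u v` is the set `L^{uv}_u` of leaves strictly closer to `u` than to `v`. -/
noncomputable def Lside {G : SimpleGraph V} [Fintype V] [DecidableRel G.Adj]
    (hT : G.IsTree) (w : Sym2 V → ℝ) (u v : V) : Finset V :=
  (leaves G).filter (fun x => tdist hT w x u < tdist hT w x v)

namespace NJ

variable {G : SimpleGraph V} (hT : G.IsTree) (w : Sym2 V → ℝ)

lemma tpath_isPath (x y : V) : (tpath hT x y).IsPath :=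
  (hT.existsUnique_path x y).choose_spec.1

lemma tpath_unique {x y : V} (p : G.Walk x y) (hp : p.IsPath) : p = tpath hT x y :=
  ((hT.existsUnique_path x y).choose_spec.2 p hp)

lemma walkWeight_append {x y z : V} (p : G.Walk x y) (q : G.Walk y z) :
    walkWeight w (p.append q) = walkWeight w p + walkWeight w q := by
  simp [walkWeight, SimpleGraph.Walk.edges_append]

lemma walkWeight_reverse {x y : V} (p : G.Walk x y) :
    walkWeight w p.reverse = walkWeight w p := by
  simp [walkWeight, SimpleGraph.Walk.edges_reverse, List.map_reverse, List.sum_reverse]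

lemma tdist_eq {x y : V} (p : G.Walk x y) (hp : p.IsPath) :
    tdist hT w x y = walkWeight w p := by
  rw [tdist, ← tpath_unique hT p hp]

lemma tdist_self (x : V) : tdist hT w x x = 0 := by
  rw [tdist_eq hT w (SimpleGraph.Walk.nil) (by simp)]; simp [walkWeight]

lemma tdist_symm (x y : V) : tdist hT w x y = tdist hT w y x := by
  rw [tdist, ← walkWeight_reverse, tdist_eq hT w (tpath hT x y).reverse
    ((tpath_isPath hT x y).reverse)]

lemma isPath_append {x y z : V} {p : G.Walk x y} {q : G.Walk y z}
    (hp : p.IsPath) (hq : q.IsPath)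
    (h : ∀ t ∈ p.support, t ∈ q.support → t = y) : (p.append q).IsPath := by
  rw [Walk.isPath_def, Walk.support_append, List.nodup_append]
  refine ⟨hp.support_nodup, ?_, ?_⟩
  · have := hq.support_nodup
    rw [q.support_eq_cons] at this
    exact this.of_cons
  · intro t ht b ht' htb
    subst htb
    have htq : t ∈ q.support := by
      rw [q.support_eq_cons]; exact List.mem_cons_of_mem _ ht'
    have : t = y := h t ht htq
    subst this
    have := hq.support_nodup
    rw [q.support_eq_cons] at this
    exact (List.nodup_cons.mp this).1 ht'

lemma exists_seg {a b s t : V} (q : G.Walk a b) (hq : q.IsPath)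
    (hs : s ∈ q.support) (ht : t ∈ q.support) :
    ∃ r : G.Walk s t, r.IsPath ∧ (∀ z ∈ r.support, z ∈ q.support) ∧
      (∀ e ∈ r.edges, e ∈ q.edges) := by
  classical
  rw [← q.take_spec hs, Walk.mem_support_append_iff] at ht
  rcases ht with ht | ht
  · have ht' : t ∈ (q.takeUntil s hs).reverse.support := by
      rw [Walk.support_reverse]; simpa using ht
    refine ⟨((q.takeUntil s hs).reverse).takeUntil t ht', ((hq.takeUntil hs).reverse).takeUntil ht', ?_, ?_⟩
    · intro z hz
      have := Walk.support_takeUntil_subset _ ht' hz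
      rw [Walk.support_reverse, List.mem_reverse] at this
      exact Walk.support_takeUntil_subset _ hs this
    · intro e he
      have := Walk.edges_takeUntil_subset _ ht' he
      rw [Walk.edges_reverse, List.mem_reverse] at this
      exact Walk.edges_takeUntil_subset _ hs this
  · refine ⟨(q.dropUntil s hs).takeUntil t ht, (hq.dropUntil hs).takeUntil ht, ?_, ?_⟩
    · intro z hz
      exact Walk.support_dropUntil_subset _ hs (Walk.support_takeUntil_subset _ ht hz)
    · intro e he
      exact Walk.edges_dropUntil_subset _ hs (Walk.edges_takeUntil_subset _ ht he)

lemma tdist_add_of_mem_support {x y s : V} (hs : s ∈ (tpath hT x y).support) :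
    tdist hT w x y = tdist hT w x s + tdist hT w s y := by
  classical
  set p := tpath hT x y with hp
  have hpp : p.IsPath := tpath_isPath hT x y
  rw [tdist, hp.symm, ← p.take_spec hs, walkWeight_append,
    ← tdist_eq hT w _ (hpp.takeUntil hs), ← tdist_eq hT w _ (hpp.dropUntil hs)]

lemma exists_meet_aux {b c : V} (q : G.Walk b c) :
    ∀ {x a : V} (wk : G.Walk x a), wk.IsPath → a ∈ q.support →
      ∃ (m : V) (r : G.Walk x m), r.IsPath ∧ m ∈ q.support ∧
        (∀ z ∈ r.support, z ∈ q.support → z = m) ∧ (∀ z ∈ r.support, z ∈ wk.support) := by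
  intro x a wk
  induction wk with
  | nil =>
      intro _ hu
      exact ⟨_, Walk.nil, by simp, hu, by simp +contextual, by simp⟩
  | @cons u u₁ a' h wk' ih =>
      intro hp ha
      by_cases hu : u ∈ q.support
      · exact ⟨u, Walk.nil, by simp, hu, by simp +contextual, by simp⟩
      · rw [Walk.cons_isPath_iff] at hp
        obtain ⟨m, r, hr1, hr2, hr3, hr4⟩ := ih hp.1 ha
        refine ⟨m, Walk.cons h r, ?_, hr2, ?_, ?_⟩
        · rw [Walk.cons_isPath_iff]
          exact ⟨hr1, fun hu' => hp.2 (hr4 _ hu')⟩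
        · intro z hz hzq
          rw [Walk.support_cons, List.mem_cons] at hz
          rcases hz with rfl | hz
          · exact absurd hzq hu
          · exact hr3 z hz hzq
        · intro z hz
          rw [Walk.support_cons, List.mem_cons] at hz
          rw [Walk.support_cons, List.mem_cons]
          rcases hz with rfl | hz
          · exact Or.inl rfl
          · exact Or.inr (hr4 z hz)

include hT in
lemma exists_meet {b c : V} (q : G.Walk b c) (x : V) :
    ∃ (m : V) (r : G.Walk x m), r.IsPath ∧ m ∈ q.support ∧
      (∀ z ∈ r.support, z ∈ q.support → z = m) := by
  obtain ⟨m, r, h1, h2, h3, _⟩ :=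
    exists_meet_aux q (tpath hT x b) (tpath_isPath hT x b) q.start_mem_support
  exact ⟨m, r, h1, h2, h3⟩

lemma meet_dist {b c x m : V} {q : G.Walk b c} (hq : q.IsPath) {r : G.Walk x m}
    (hr : r.IsPath) (hm : m ∈ q.support) (hmin : ∀ z ∈ r.support, z ∈ q.support → z = m) :
    ∀ s ∈ q.support, tdist hT w x s = tdist hT w x m + tdist hT w m s := by
  intro s hs
  obtain ⟨seg, hseg, hsub, _⟩ := exists_seg q hq hm hs
  have hps : (r.append seg).IsPath :=
    isPath_append hr hseg (fun t ht hts => hmin t ht (hsub t hts))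
  rw [tdist_eq hT w _ hps, walkWeight_append, ← tdist_eq hT w r hr, ← tdist_eq hT w seg hseg]


variable (hw : ∀ e ∈ G.edgeSet, 0 < w e)

include hw in
lemma walkWeight_nonneg {x y : V} (p : G.Walk x y) : 0 ≤ walkWeight w p := by
  apply List.sum_nonneg
  intro a ha
  obtain ⟨e, he, rfl⟩ := List.mem_map.mp ha
  exact (hw e (p.edges_subset_edgeSet he)).le

include hw in
lemma tdist_nonneg (x y : V) : 0 ≤ tdist hT w x y := walkWeight_nonneg w hw _

include hw in
lemma tdist_pos {x y : V} (h : x ≠ y) : 0 < tdist hT w x y := by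
  rw [tdist]
  cases hp : tpath hT x y with
  | nil => exact absurd rfl h
  | cons h' q =>
      rw [walkWeight]
      simp only [SimpleGraph.Walk.edges_cons, List.map_cons, List.sum_cons]
      have h1 : 0 < w s(x, _) := hw _ h'
      have h2 : 0 ≤ (q.edges.map w).sum := by
        apply List.sum_nonneg
        intro a ha
        obtain ⟨e, he, rfl⟩ := List.mem_map.mp ha
        refine (hw e (q.edges_subset_edgeSet he)).le
      linarith

include hw in
lemma eq_of_tdist_eq_zero {x y : V} (h : tdist hT w x y = 0) : x = y := by
  by_contra hne
  exact absurd h (ne_of_gt (tdist_pos hT w hw hne))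


include hw in
lemma tdist_triangle (a b x : V) :
    tdist hT w a b ≤ tdist hT w a x + tdist hT w x b := by
  obtain ⟨m, r, hr, hm, hmin'⟩ := exists_meet hT (tpath hT a b) x
  have hq := tpath_isPath hT a b
  have h1 := meet_dist hT w hq hr hm hmin' a (Walk.start_mem_support _)
  have h2 := meet_dist hT w hq hr hm hmin' b (Walk.end_mem_support _)
  have h3 := tdist_add_of_mem_support hT w hm
  have h4 := tdist_nonneg hT w hw x m
  have h5 := tdist_symm hT w x a
  have h6 := tdist_symm hT w m a
  have h7 := tdist_symm hT w a x
  linarith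

lemma meet_ext_dist {b c x m : V} {q : G.Walk b c} (hq : q.IsPath) {r : G.Walk x m}
    (hr : r.IsPath) (hm : m ∈ q.support) (hmin : ∀ z ∈ r.support, z ∈ q.support → z = m) :
    ∀ t ∈ r.support, ∀ s ∈ q.support, tdist hT w t s = tdist hT w t m + tdist hT w m s := by
  classical
  intro t ht s hs
  obtain ⟨seg, hseg, hsub, _⟩ := exists_seg q hq hm hs
  have hd : (r.dropUntil t ht).IsPath := hr.dropUntil ht
  have hps : ((r.dropUntil t ht).append seg).IsPath := by
    apply isPath_append hd hseg
    intro z hz hz2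
    exact hmin z (Walk.support_dropUntil_subset r ht hz) (hsub z hz2)
  rw [tdist_eq hT w _ hps, walkWeight_append, ← tdist_eq hT w _ hd, ← tdist_eq hT w seg hseg]

include hw in
lemma F2a {b b' x y mx my : V} {q : G.Walk b b'} (hq : q.IsPath)
    {rx : G.Walk x mx} {ry : G.Walk y my} (hrx : rx.IsPath) (hry : ry.IsPath)
    (hmx : mx ∈ q.support) (hmy : my ∈ q.support)
    (hminx : ∀ z ∈ rx.support, z ∈ q.support → z = mx)
    (hminy : ∀ z ∈ ry.support, z ∈ q.support → z = my) (hne : mx ≠ my) :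
    tdist hT w x y = tdist hT w x mx + tdist hT w mx my + tdist hT w my y := by
  classical
  have hdisj : ∀ z, z ∈ rx.support → z ∈ ry.support → False := by
    intro z hzx hzy
    have e1 := meet_ext_dist hT w hq hrx hmx hminx z hzx my hmy
    have e2 := meet_ext_dist hT w hq hry hmy hminy z hzy mx hmx
    have e3 := tdist_symm hT w mx my
    have e4 := tdist_pos hT w hw hne
    linarith
  obtain ⟨seg, hseg, hsub, _⟩ := exists_seg q hq hmx hmy
  have hinner : (seg.append ry.reverse).IsPath := by
    apply isPath_append hseg hry.reverse
    intro z hz hz2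
    rw [Walk.support_reverse, List.mem_reverse] at hz2
    exact hminy z hz2 (hsub z hz)
  have houter : (rx.append (seg.append ry.reverse)).IsPath := by
    apply isPath_append hrx hinner
    intro z hz hz2
    rw [Walk.mem_support_append_iff] at hz2
    rcases hz2 with hz2 | hz2
    · exact hminx z hz (hsub z hz2)
    · rw [Walk.support_reverse, List.mem_reverse] at hz2
      exact (hdisj z hz hz2).elim
  have := tdist_eq hT w _ houter
  rw [walkWeight_append, walkWeight_append, walkWeight_reverse,
    ← tdist_eq hT w rx hrx, ← tdist_eq hT w seg hseg, ← tdist_eq hT w ry hry] at this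
  have := this
  have hsymm := tdist_symm hT w y my
  linarith

lemma countP_edges_aux [DecidableEq V] {a b : V} (q : G.Walk a b) (hq : q.IsPath) (c : V) :
    (List.countP (fun e => decide (c ∈ e)) q.edges ≤ 2) ∧
      (c = a → List.countP (fun e => decide (c ∈ e)) q.edges ≤ 1) ∧
      (c ∉ q.support → List.countP (fun e => decide (c ∈ e)) q.edges = 0) := by
  induction q with
  | nil => simp
  | @cons u u₁ b h q' ih =>
      rw [Walk.cons_isPath_iff] at hq
      obtain ⟨hq', hu⟩ := hq
      obtain ⟨ih1, ih2, ih3⟩ := ih hq'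
      have hmem : (c ∈ s(u, u₁)) ↔ (c = u ∨ c = u₁) := Sym2.mem_iff
      refine ⟨?_, ?_, ?_⟩
      · rw [Walk.edges_cons, List.countP_cons]
        by_cases hcu : c = u
        · have h0 : List.countP (fun e => decide (c ∈ e)) q'.edges = 0 :=
            ih3 (by rw [hcu]; exact hu)
          have hle : (if decide (c ∈ s(u, u₁)) = true then 1 else 0) ≤ 1 := by split <;> omega
          omega
        · by_cases hcu1 : c = u₁
          · have h1 : List.countP (fun e => decide (c ∈ e)) q'.edges ≤ 1 := ih2 hcu1
            have hle : (if decide (c ∈ s(u, u₁)) = true then 1 else 0) ≤ 1 := by split <;> omega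
            omega
          · have hnot : ¬ (c ∈ s(u, u₁)) := by rw [hmem]; tauto
            have h00 : (if decide (c ∈ s(u, u₁)) = true then 1 else 0) = 0 := by simp [hnot]
            omega
      · intro hca
        subst hca
        rw [Walk.edges_cons, List.countP_cons]
        have h0 : List.countP (fun e => decide (c ∈ e)) q'.edges = 0 := ih3 hu
        have hle : (if decide (c ∈ s(c, u₁)) = true then 1 else 0) ≤ 1 := by split <;> omega
        omega
      · intro hcs
        rw [Walk.support_cons, List.mem_cons] at hcs
        push_neg at hcs
        obtain ⟨hcu, hcs'⟩ := hcs
        rw [Walk.edges_cons, List.countP_cons]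
        have h0 : List.countP (fun e => decide (c ∈ e)) q'.edges = 0 := ih3 hcs'
        have hnot : ¬ (c ∈ s(u, u₁)) := by
          rw [hmem]
          push_neg
          exact ⟨hcu, fun hc1 => hcs' (hc1 ▸ q'.start_mem_support)⟩
        have h00 : (if decide (c ∈ s(u, u₁)) = true then 1 else 0) = 0 := by simp [hnot]
        omega

include hT in
lemma degree_le_of_nbrs_on_path [Fintype V] [DecidableRel G.Adj] {a b c : V}
    (q : G.Walk a b) (hq : q.IsPath) (hc : c ∈ q.support)
    (hall : ∀ t, G.Adj c t → t ∈ q.support) :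
    G.degree c ≤ 2 ∧ (c = a → G.degree c ≤ 1) := by
  classical
  have hedge : ∀ t, G.Adj c t → s(c, t) ∈ q.edges := by
    intro t ht
    obtain ⟨r, hr, _, hesub⟩ := exists_seg q hq hc (hall t ht)
    have het : (Walk.cons ht Walk.nil : G.Walk c t).IsPath := by simp [ht.ne]
    have h1 : (Walk.cons ht (Walk.nil) : G.Walk c t) = tpath hT c t := tpath_unique hT _ het
    have hr' : r = tpath hT c t := tpath_unique hT r hr
    have : s(c, t) ∈ r.edges := by rw [hr', ← h1]; simp
    exact hesub _ this
  set E := (q.edges.toFinset.filter (fun e => c ∈ e)) with hE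
  have hdegE : G.degree c ≤ E.card := by
    rw [← card_neighborFinset_eq_degree]
    apply Finset.card_le_card_of_injOn (fun t => s(c, t))
    · intro t htm
      rw [Finset.mem_coe, mem_neighborFinset] at htm
      rw [hE, Finset.mem_coe, Finset.mem_filter]
      exact ⟨List.mem_toFinset.mpr (hedge t htm), Sym2.mem_mk_left c t⟩
    · intro t1 _ t2 _ hst
      exact Sym2.congr_right.mp hst
  have hEcount : E.card ≤ List.countP (fun e => decide (c ∈ e)) q.edges := by
    rw [List.countP_eq_length_filter]
    have hsub : E ⊆ (q.edges.filter (fun e => decide (c ∈ e))).toFinset := by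
      intro e he
      rw [hE, Finset.mem_filter] at he
      rw [List.mem_toFinset, List.mem_filter]
      exact ⟨List.mem_toFinset.mp he.1, by simpa using he.2⟩
    calc E.card ≤ _ := Finset.card_le_card hsub
      _ ≤ _ := List.toFinset_card_le _
  obtain ⟨h2, h1, _⟩ := countP_edges_aux q hq c
  exact ⟨by omega, fun hca => by have := h1 hca; omega⟩

include hT in
lemma exists_offpath_nbr [Fintype V] [DecidableRel G.Adj] {a b c : V}
    (q : G.Walk a b) (hq : q.IsPath) (hc : c ∈ q.support) (h3 : 3 ≤ G.degree c) :
    ∃ t, G.Adj c t ∧ t ∉ q.support := by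
  by_contra hno
  push_neg at hno
  have := (degree_le_of_nbrs_on_path hT q hq hc fun t ht => hno t ht).1
  omega

include hT in
lemma endpoint_leaf [Fintype V] [DecidableRel G.Adj] {a x : V}
    (q : G.Walk a x) (hq : q.IsPath) (hall : ∀ t, G.Adj x t → t ∈ q.support)
    (hex : ∃ t, G.Adj x t) : G.degree x = 1 := by
  have hge : 0 < G.degree x := (G.degree_pos_iff_exists_adj x).mpr hex
  have hall' : ∀ t, G.Adj x t → t ∈ q.reverse.support := by
    intro t ht
    rw [Walk.support_reverse, List.mem_reverse]
    exact hall t ht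
  have := (degree_le_of_nbrs_on_path hT q.reverse hq.reverse
    (Walk.start_mem_support _) hall').2 rfl
  omega
include hw in
lemma exists_branch_leaf [Fintype V] [DecidableRel G.Adj] {a b c t₀ : V}
    (q : G.Walk a b) (hq : q.IsPath) (hc : c ∈ q.support)
    (hadj : G.Adj c t₀) (ht₀ : t₀ ∉ q.support) :
    ∃ x, G.degree x = 1 ∧ x ∉ q.support ∧
      ∀ s ∈ q.support, tdist hT w x s = tdist hT w x c + tdist hT w c s := by
  classical
  set S := Finset.univ.filter (fun s => t₀ ∈ (tpath hT c s).support) with hS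
  have hedgewalk : (Walk.cons hadj Walk.nil : G.Walk c t₀).IsPath := by simp [hadj.ne]
  have htS : t₀ ∈ S := by
    rw [hS, Finset.mem_filter]
    refine ⟨Finset.mem_univ _, ?_⟩
    rw [← tpath_unique hT _ hedgewalk]
    simp
  obtain ⟨x, hxS, hxmax⟩ := S.exists_max_image (fun s => tdist hT w c s) ⟨t₀, htS⟩
  rw [hS, Finset.mem_filter] at hxS
  have hxS' : t₀ ∈ (tpath hT c x).support := hxS.2
  set P := tpath hT c x with hP
  have hPp : P.IsPath := tpath_isPath hT c x
  have hxc : x ≠ c := by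
    rintro rfl
    have hnil : (Walk.nil : G.Walk x x) = tpath hT x x := tpath_unique hT _ (by simp)
    rw [hP, ← hnil] at hxS'
    simp only [Walk.support_nil, List.mem_singleton] at hxS'
    exact hadj.ne' hxS'
  have hnbrP : ∀ t, G.Adj x t → t ∈ P.support := by
    intro t ht
    by_contra htP
    have hconc : (P.concat ht).IsPath := by
      rw [Walk.concat_eq_append]
      apply isPath_append hPp (by simp [ht.ne])
      intro z hz hz2
      have hz3 : z = x ∨ z = t := by simpa using hz2
      rcases hz3 with rfl | rfl
      · rfl
      · exact absurd hz htP
    have htS2 : t ∈ S := by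
      rw [hS, Finset.mem_filter]
      refine ⟨Finset.mem_univ _, ?_⟩
      rw [← tpath_unique hT _ hconc, Walk.support_concat]
      exact List.mem_append_left _ hxS'
    have hle := hxmax t htS2
    have hPw : walkWeight w P = tdist hT w c x := (tdist_eq hT w P hPp).symm
    have hdct : tdist hT w c t = tdist hT w c x + w s(x, t) := by
      rw [tdist_eq hT w _ hconc]
      simp only [walkWeight, Walk.edges_concat, List.concat_eq_append, List.map_append,
        List.sum_append, List.map_cons, List.map_nil, List.sum_cons, List.sum_nil]
      rw [show (List.map w P.edges).sum = walkWeight w P from rfl, hPw]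
      ring
    have hpos : 0 < w s(x, t) := hw _ ht
    linarith
  obtain ⟨y₁, hcy₁, P₂, hP₂⟩ := Walk.exists_eq_cons_of_ne (Ne.symm hxc) P
  have hP₂p : P₂.IsPath := by
    have := hPp
    rw [hP₂, Walk.cons_isPath_iff] at this
    exact this.1
  have hcP₂ : c ∉ P₂.support := by
    have := hPp
    rw [hP₂, Walk.cons_isPath_iff] at this
    exact this.2
  have hdeg : G.degree x = 1 := by
    obtain ⟨y', hxy', _, _⟩ := Walk.exists_eq_cons_of_ne hxc P.reverse
    exact endpoint_leaf hT P hPp hnbrP ⟨y', hxy'⟩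
  have hy₁ : y₁ = t₀ := by
    by_contra hne
    have ht₀P₂ : t₀ ∈ P₂.support := by
      have h' := hxS'
      rw [hP₂, Walk.support_cons, List.mem_cons] at h'
      rcases h' with h' | h'
      · exact absurd h' hadj.ne'
      · exact h'
    obtain ⟨r, hr, hrsub, _⟩ := exists_seg P₂ hP₂p P₂.start_mem_support ht₀P₂
    have hconsr : (Walk.cons hcy₁ r).IsPath := by
      rw [Walk.cons_isPath_iff]
      exact ⟨hr, fun hcr => hcP₂ (hrsub c hcr)⟩
    have heq : Walk.cons hcy₁ r = Walk.cons hadj Walk.nil := by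
      rw [tpath_unique hT _ hconsr, ← tpath_unique hT _ hedgewalk]
    have hsup := congrArg Walk.support heq
    simp only [Walk.support_cons, Walk.support_nil, List.cons.injEq] at hsup
    have hy1r : y₁ ∈ r.support := r.start_mem_support
    rw [hsup.2] at hy1r
    exact hne (List.mem_singleton.mp hy1r)
  have hdisj : ∀ z, z ∈ P.support → z ∈ q.support → z = c := by
    intro z hz hzq
    by_contra hzc
    have hzP₂ : z ∈ P₂.support := by
      rw [hP₂, Walk.support_cons, List.mem_cons] at hz
      tauto
    obtain ⟨r1, hr1, hr1sub, _⟩ := exists_seg q hq hc hzq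
    obtain ⟨r2, hr2, hr2sub, _⟩ := exists_seg P₂ hP₂p P₂.start_mem_support hzP₂
    have hcons2 : (Walk.cons hcy₁ r2).IsPath := by
      rw [Walk.cons_isPath_iff]
      exact ⟨hr2, fun hcr => hcP₂ (hr2sub c hcr)⟩
    have heq : r1 = Walk.cons hcy₁ r2 := by
      rw [tpath_unique hT r1 hr1, ← tpath_unique hT _ hcons2]
    have ht0r1 : y₁ ∈ r1.support := by
      rw [heq, Walk.support_cons]
      exact List.mem_cons_of_mem _ r2.start_mem_support
    exact ht₀ (hy₁ ▸ hr1sub _ ht0r1)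
  have hxq : x ∉ q.support := fun hxq2 => hxc (hdisj x P.end_mem_support hxq2)
  refine ⟨x, hdeg, hxq, ?_⟩
  intro s hs
  obtain ⟨r3, hr3, hr3sub, _⟩ := exists_seg q hq hc hs
  have hfin : (P.reverse.append r3).IsPath := by
    apply isPath_append hPp.reverse hr3
    intro z hz hz2
    rw [Walk.support_reverse, List.mem_reverse] at hz
    exact hdisj z hz (hr3sub z hz2)
  have hws := tdist_eq hT w _ hfin
  rw [walkWeight_append, walkWeight_reverse, ← tdist_eq hT w P hPp,
    ← tdist_eq hT w r3 hr3] at hws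
  rw [hws, tdist_symm hT w x c]
include hT in
lemma leaf_dist_decomp [Fintype V] [DecidableRel G.Adj] {u c x : V}
    (hu : G.degree u = 1) (huc : G.Adj u c) (hx : x ≠ u) :
    tdist hT w u x = tdist hT w u c + tdist hT w c x := by
  classical
  have huniq : ∀ z, G.Adj u z → z = c := by
    intro z hz
    have h1 : (G.neighborFinset u).card = 1 := by
      rwa [card_neighborFinset_eq_degree]
    obtain ⟨m, hm⟩ := Finset.card_eq_one.mp h1
    have hzc : z ∈ ({m} : Finset V) := hm ▸ (G.mem_neighborFinset u z).mpr hz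
    have hcc : c ∈ ({m} : Finset V) := hm ▸ (G.mem_neighborFinset u c).mpr huc
    simp only [Finset.mem_singleton] at hzc hcc
    rw [hzc, hcc]
  obtain ⟨y₁, huy₁, q', hq'⟩ := Walk.exists_eq_cons_of_ne (Ne.symm hx) (tpath hT u x)
  have hy₁c : y₁ = c := huniq y₁ huy₁
  rw [← hy₁c]
  have hqp : q'.IsPath := by
    have hh := tpath_isPath hT u x
    rw [hq', Walk.cons_isPath_iff] at hh
    exact hh.1
  have hedge : tdist hT w u y₁ = w s(u, y₁) := by
    rw [tdist_eq hT w (Walk.cons huy₁ Walk.nil) (by simp [huy₁.ne])]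
    simp [walkWeight]
  have hpx : tdist hT w u x = walkWeight w (Walk.cons huy₁ q') := by
    have h0 : tdist hT w u x = walkWeight w (tpath hT u x) := rfl
    rw [h0, hq']
  rw [hpx]
  simp only [walkWeight, Walk.edges_cons, List.map_cons, List.sum_cons]
  rw [show (List.map w q'.edges).sum = walkWeight w q' from rfl,
    ← tdist_eq hT w q' hqp, hedge]

lemma interior_two_nbrs [Fintype V] [DecidableRel G.Adj] {a b c₁ : V} {h : G.Adj a c₁}
    {Q : G.Walk c₁ b} (hP : (Walk.cons h Q).IsPath) (hcb : c₁ ≠ b) :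
    2 ≤ G.degree c₁ := by
  obtain ⟨y₂, hcy₂, Q₂, hQ₂⟩ := Walk.exists_eq_cons_of_ne hcb Q
  rw [Walk.cons_isPath_iff] at hP
  have hy₂a : a ≠ y₂ := by
    rintro rfl
    apply hP.2
    rw [hQ₂, Walk.support_cons]
    exact List.mem_cons_of_mem _ Q₂.start_mem_support
  rw [← card_neighborFinset_eq_degree]
  exact Finset.one_lt_card.mpr
    ⟨a, (G.mem_neighborFinset c₁ a).mpr h.symm, y₂, (G.mem_neighborFinset c₁ y₂).mpr hcy₂, hy₂a⟩
include hT in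
set_option maxHeartbeats 1600000 in
lemma endgame [Fintype V] [DecidableEq V] [DecidableRel G.Adj]
    (hw : ∀ e ∈ G.edgeSet, 0 < w e)
    (u v c e xc xe : V) (m : V → V)
    (hu : u ∈ leaves G) (hv : v ∈ leaves G) (hxcL : xc ∈ leaves G) (hxeL : xe ∈ leaves G)
    (huv : u ≠ v) (hce : c ≠ e) (hcu : c ≠ u) (hcv : c ≠ v) (heu : e ≠ u) (hev : e ≠ v)
    (hmu : m u = u) (hmv : m v = v) (hmxc : m xc = c) (hmxe : m xe = e)
    (hdu : ∀ y ∈ leaves G, tdist hT w y u = tdist hT w y (m y) + tdist hT w (m y) u)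
    (hdv : ∀ y ∈ leaves G, tdist hT w y v = tdist hT w y (m y) + tdist hT w (m y) v)
    (hE3 : ∀ y ∈ leaves G, tdist hT w (m y) u + tdist hT w (m y) v = tdist hT w u v)
    (hF2a : ∀ x ∈ leaves G, ∀ y ∈ leaves G, m x ≠ m y →
      tdist hT w x y = tdist hT w x (m x) + tdist hT w (m x) (m y) + tdist hT w (m y) y)
    (hE5 : tdist hT w u v = tdist hT w u c + tdist hT w c v)
    (hE4 : tdist hT w c v = tdist hT w c e + tdist hT w e v)
    (hmin : ∀ a ∈ leaves G, ∀ b ∈ leaves G, a ≠ b →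
      (((leaves G).card : ℝ) - 2) * tdist hT w u v
          - (∑ x ∈ leaves G, tdist hT w u x) - (∑ x ∈ leaves G, tdist hT w v x) ≤
        (((leaves G).card : ℝ) - 2) * tdist hT w a b
          - (∑ x ∈ leaves G, tdist hT w a x) - (∑ x ∈ leaves G, tdist hT w b x))
    (hsmall : 2 * ((leaves G).filter (fun y => m y = c)).card ≤ (leaves G).card) :
    False := by
  classical
  set F := (leaves G).filter (fun y => m y = c) with hF
  have hxcF : xc ∈ F := by rw [hF, Finset.mem_filter]; exact ⟨hxcL, hmxc⟩
  have hxcu : xc ≠ u := fun h => hcu (by rw [← hmxc, h, hmu])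
  have hxcv : xc ≠ v := fun h => hcv (by rw [← hmxc, h, hmv])
  have hxeu : xe ≠ u := fun h => heu (by rw [← hmxe, h, hmu])
  have hxev : xe ≠ v := fun h => hev (by rw [← hmxe, h, hmv])
  have hxcxe : xc ≠ xe := fun h => hce (by rw [← hmxc, h, hmxe])
  have hdcepos : 0 < tdist hT w c e := tdist_pos hT w hw hce
  by_cases hF1 : F.card = 1
  -- CASE A ---------------------------------------------------------------
  · obtain ⟨z, hz⟩ := Finset.card_eq_one.mp hF1
    have hzxc : z = xc := by
      have := hxcF; rw [hz, Finset.mem_singleton] at this; exact this.symm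
    rw [hzxc] at hz
    have honly : ∀ y ∈ leaves G, y ≠ xc → m y ≠ c := by
      intro y hy hne hc
      have : y ∈ F := by rw [hF, Finset.mem_filter]; exact ⟨hy, hc⟩
      rw [hz, Finset.mem_singleton] at this
      exact hne this
    have hA := hmin u hu xc hxcL (Ne.symm hxcu)
    set K := tdist hT w c xc - tdist hT w c v with hK
    have hterm0 : ∀ y ∈ leaves G, y ≠ xc → y ≠ v →
        0 ≤ tdist hT w y xc - tdist hT w y v - K := by
      intro y hy h1 _
      have hf := hF2a y hy xc hxcL (by rw [hmxc]; exact honly y hy h1)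
      rw [hmxc] at hf
      have hdvy := hdv y hy
      have htri := tdist_triangle hT w hw (m y) v c
      rw [hK]
      linarith
    have hsv : tdist hT w v xc - tdist hT w v v - K = 2 * tdist hT w c v := by
      have hf := hF2a v hv xc hxcL (by rw [hmv, hmxc]; exact Ne.symm hcv)
      rw [hmv, hmxc] at hf
      have h0 := tdist_self hT w v
      have hs1 := tdist_symm hT w v c
      rw [hK]; linarith
    have hsxc : tdist hT w xc xc - tdist hT w xc v - K = -2 * tdist hT w c xc := by
      have hdvxc := hdv xc hxcL
      rw [hmxc] at hdvxc
      have h0 := tdist_self hT w xc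
      have hs1 := tdist_symm hT w xc c
      rw [hK]; linarith
    have hsxe : tdist hT w xe xc - tdist hT w xe v - K = 2 * tdist hT w c e := by
      have hf := hF2a xe hxeL xc hxcL (by rw [hmxe, hmxc]; exact Ne.symm hce)
      rw [hmxe, hmxc] at hf
      have hdvxe := hdv xe hxeL
      rw [hmxe] at hdvxe
      have hs1 := tdist_symm hT w e c
      rw [hK]; linarith
    set T3 : Finset V := {v, xc, xe} with hT3
    have hTsub : T3 ⊆ leaves G := by
      intro t ht
      rw [hT3] at ht
      simp only [Finset.mem_insert, Finset.mem_singleton] at ht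
      rcases ht with rfl | rfl | rfl
      · exact hv
      · exact hxcL
      · exact hxeL
    have hsumT : ∑ y ∈ T3, (tdist hT w y xc - tdist hT w y v - K)
        = 2 * tdist hT w c v - 2 * tdist hT w c xc + 2 * tdist hT w c e := by
      have hv1 : v ∉ ({xc, xe} : Finset V) := by
        simp only [Finset.mem_insert, Finset.mem_singleton]
        push_neg
        exact ⟨Ne.symm hxcv, Ne.symm hxev⟩
      have hv2 : xc ∉ ({xe} : Finset V) := by simp [hxcxe]
      rw [hT3, Finset.sum_insert hv1, Finset.sum_insert hv2, Finset.sum_singleton]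
      linarith
    have hsumrest : 0 ≤ ∑ y ∈ leaves G \ T3, (tdist hT w y xc - tdist hT w y v - K) := by
      apply Finset.sum_nonneg
      intro y hy
      rw [Finset.mem_sdiff, hT3] at hy
      simp only [Finset.mem_insert, Finset.mem_singleton] at hy
      push_neg at hy
      exact hterm0 y hy.1 hy.2.2.1 hy.2.1
    have hsplit := Finset.sum_sdiff (f := fun y => tdist hT w y xc - tdist hT w y v - K) hTsub
    have hexp : ∑ y ∈ leaves G, (tdist hT w y xc - tdist hT w y v - K)
        = (∑ y ∈ leaves G, tdist hT w y xc) - (∑ y ∈ leaves G, tdist hT w y v)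
          - ((leaves G).card : ℝ) * K := by
      rw [Finset.sum_sub_distrib, Finset.sum_sub_distrib, Finset.sum_const, nsmul_eq_mul]
    have hconv1 : ∑ x ∈ leaves G, tdist hT w v x = ∑ y ∈ leaves G, tdist hT w y v :=
      Finset.sum_congr rfl (fun y _ => tdist_symm hT w v y)
    have hconv2 : ∑ x ∈ leaves G, tdist hT w xc x = ∑ y ∈ leaves G, tdist hT w y xc :=
      Finset.sum_congr rfl (fun y _ => tdist_symm hT w xc y)
    have hKrel : tdist hT w u xc - tdist hT w u v = K := by
      have hduxc := hdu xc hxcL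
      rw [hmxc] at hduxc
      have hs1 := tdist_symm hT w u xc
      have hs2 := tdist_symm hT w c u
      have hs3 := tdist_symm hT w xc c
      rw [hK]; linarith
    have hprod : (((leaves G).card : ℝ) - 2) * tdist hT w u xc
        - (((leaves G).card : ℝ) - 2) * tdist hT w u v = (((leaves G).card : ℝ) - 2) * K := by
      rw [← mul_sub, hKrel]
    have hring : ((leaves G).card : ℝ) * K = (((leaves G).card : ℝ) - 2) * K + 2 * K := by ring
    linarith [hA, hsplit, hsumT, hsumrest, hexp, hconv1, hconv2]
  · -- CASE B
    have hF2 : 2 ≤ F.card := by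
      have hpos : 1 ≤ F.card := Finset.card_pos.mpr ⟨xc, hxcF⟩
      omega
    obtain ⟨a0, ha0, b0, hb0, hab0⟩ := Finset.one_lt_card.mp (by omega : 1 < F.card)
    set PF := (F ×ˢ F).filter (fun ab => ab.1 ≠ ab.2) with hPF
    have hPFne : PF.Nonempty := by
      refine ⟨(a0, b0), ?_⟩
      rw [hPF, Finset.mem_filter, Finset.mem_product]
      exact ⟨⟨ha0, hb0⟩, hab0⟩
    obtain ⟨⟨x, x'⟩, hp0PF, hmax⟩ := PF.exists_max_image
      (fun ab => tdist hT w ab.1 c + tdist hT w c ab.2 - tdist hT w ab.1 ab.2) hPFne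
    rw [hPF, Finset.mem_filter, Finset.mem_product] at hp0PF
    obtain ⟨⟨hxF0, hx'F0⟩, hxx'0⟩ := hp0PF
    have hxF : x ∈ F := hxF0
    have hx'F : x' ∈ F := hx'F0
    have hxx' : x ≠ x' := hxx'0
    have hxF2 : x ∈ (leaves G).filter (fun y => m y = c) := by rw [← hF]; exact hxF
    rw [Finset.mem_filter] at hxF2
    obtain ⟨hxL, hmx⟩ := hxF2
    have hx'F2 : x' ∈ (leaves G).filter (fun y => m y = c) := by rw [← hF]; exact hx'F
    rw [Finset.mem_filter] at hx'F2
    obtain ⟨hx'L, hmx'⟩ := hx'F2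
    set δ2 := tdist hT w x c + tdist hT w c x' - tdist hT w x x' with hδ
    have hδ0 : 0 ≤ δ2 := by
      have htr := tdist_triangle hT w hw x x' c
      rw [hδ]; linarith
    have hφ : ∀ y ∈ F, y ≠ x →
        tdist hT w x c + tdist hT w c y - tdist hT w x y ≤ δ2 := by
      intro y hy hne
      exact hmax (x, y) (by
        rw [hPF, Finset.mem_filter, Finset.mem_product]
        exact ⟨⟨hxF, hy⟩, Ne.symm hne⟩)
    have hφ' : ∀ y ∈ F, y ≠ x' →
        tdist hT w x' c + tdist hT w c y - tdist hT w x' y ≤ δ2 := by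
      intro y hy hne
      exact hmax (x', y) (by
        rw [hPF, Finset.mem_filter, Finset.mem_product]
        exact ⟨⟨hx'F, hy⟩, Ne.symm hne⟩)
    have hxu : x ≠ u := fun h => hcu (by rw [← hmx, h, hmu])
    have hxv : x ≠ v := fun h => hcv (by rw [← hmx, h, hmv])
    have hx'u : x' ≠ u := fun h => hcu (by rw [← hmx', h, hmu])
    have hx'v : x' ≠ v := fun h => hcv (by rw [← hmx', h, hmv])
    have hxxe : x ≠ xe := fun h => hce (by rw [← hmx, h, hmxe])
    have hx'xe : x' ≠ xe := fun h => hce (by rw [← hmx', h, hmxe])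
    have hB := hmin x hxL x' hx'L hxx'
    set Hf : V → ℝ := fun y => tdist hT w x x' - tdist hT w u v - tdist hT w y x
      - tdist hT w y x' + tdist hT w y u + tdist hT w y v with hHf
    set T5 : Finset V := {u, v, x, x', xe} with hT5
    have hHgen : ∀ y ∈ leaves G \ T5, Hf y ≤ (if y ∈ F then δ2 else -δ2) := by
      intro y hy
      rw [Finset.mem_sdiff, hT5] at hy
      obtain ⟨hyL, hyT⟩ := hy
      simp only [Finset.mem_insert, Finset.mem_singleton] at hyT
      push_neg at hyT
      obtain ⟨hyu, hyv, hyx, hyx', hyxe⟩ := hyT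
      have hduy := hdu y hyL
      have hdvy := hdv y hyL
      have hE3y := hE3 y hyL
      by_cases hyF : y ∈ F
      · rw [if_pos hyF]
        have hmy : m y = c := by
          have := hyF; rw [hF, Finset.mem_filter] at this; exact this.2
        rw [hmy] at hduy hdvy hE3y
        have h1 := hφ y hyF hyx
        have h2 := hφ' y hyF hyx'
        have s1 := tdist_symm hT w y x
        have s2 := tdist_symm hT w y x'
        have s3 := tdist_symm hT w y c
        have s4 := tdist_symm hT w c x'
        simp only [hHf]
        rw [hδ] at h1 h2 ⊢
        linarith
      · rw [if_neg hyF]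
        have hmy : m y ≠ c := fun h => hyF (by rw [hF, Finset.mem_filter]; exact ⟨hyL, h⟩)
        have hf1 := hF2a y hyL x hxL (by rw [hmx]; exact hmy)
        have hf2 := hF2a y hyL x' hx'L (by rw [hmx']; exact hmy)
        rw [hmx] at hf1
        rw [hmx'] at hf2
        have hnn := tdist_nonneg hT w hw (m y) c
        have s5 := tdist_symm hT w x c
        have s6 := tdist_symm hT w y x
        have s7 := tdist_symm hT w y x'
        simp only [hHf]
        rw [hδ]
        linarith
    have hHu : Hf u = -δ2 - 2 * tdist hT w c u := by
      have h1 := hdu x hxL; rw [hmx] at h1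
      have h2 := hdu x' hx'L; rw [hmx'] at h2
      have h0 := tdist_self hT w u
      have s1 := tdist_symm hT w u x
      have s2 := tdist_symm hT w u x'
      have s4 := tdist_symm hT w c x'
      simp only [hHf]
      rw [hδ]
      linarith
    have hHv : Hf v = -δ2 - 2 * tdist hT w c v := by
      have h1 := hdv x hxL; rw [hmx] at h1
      have h2 := hdv x' hx'L; rw [hmx'] at h2
      have h0 := tdist_self hT w v
      have s1 := tdist_symm hT w v x
      have s2 := tdist_symm hT w v x'
      have s3 := tdist_symm hT w v u
      have s4 := tdist_symm hT w c x'
      simp only [hHf]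
      rw [hδ]
      linarith
    have hHx : Hf x = 2 * tdist hT w x c := by
      have h1 := hdu x hxL
      have h2 := hdv x hxL
      have h3 := hE3 x hxL
      rw [hmx] at h1 h2 h3
      have h0 := tdist_self hT w x
      simp only [hHf]
      linarith
    have hHx' : Hf x' = 2 * tdist hT w x' c := by
      have h1 := hdu x' hx'L
      have h2 := hdv x' hx'L
      have h3 := hE3 x' hx'L
      rw [hmx'] at h1 h2 h3
      have h0 := tdist_self hT w x'
      have s1 := tdist_symm hT w x' x
      simp only [hHf]
      linarith
    have hHxe : Hf xe = -δ2 - 2 * tdist hT w e c := by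
      have hf1 := hF2a xe hxeL x hxL (by rw [hmxe, hmx]; exact Ne.symm hce)
      have hf2 := hF2a xe hxeL x' hx'L (by rw [hmxe, hmx']; exact Ne.symm hce)
      rw [hmxe, hmx] at hf1
      rw [hmxe, hmx'] at hf2
      have h1 := hdu xe hxeL
      have h2 := hdv xe hxeL
      have h3 := hE3 xe hxeL
      rw [hmxe] at h1 h2 h3
      have s5 := tdist_symm hT w x c
      have s6 := tdist_symm hT w xe x
      have s7 := tdist_symm hT w xe x'
      simp only [hHf]
      rw [hδ]
      linarith
    have hT5sub : T5 ⊆ leaves G := by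
      intro t ht
      rw [hT5] at ht
      simp only [Finset.mem_insert, Finset.mem_singleton] at ht
      rcases ht with rfl | rfl | rfl | rfl | rfl
      · exact hu
      · exact hv
      · exact hxL
      · exact hx'L
      · exact hxeL
    have hm1 : u ∉ ({v, x, x', xe} : Finset V) := by
      simp only [Finset.mem_insert, Finset.mem_singleton]
      push_neg
      exact ⟨huv, Ne.symm hxu, Ne.symm hx'u, Ne.symm hxeu⟩
    have hm2 : v ∉ ({x, x', xe} : Finset V) := by
      simp only [Finset.mem_insert, Finset.mem_singleton]
      push_neg
      exact ⟨Ne.symm hxv, Ne.symm hx'v, Ne.symm hxev⟩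
    have hm3 : x ∉ ({x', xe} : Finset V) := by
      simp only [Finset.mem_insert, Finset.mem_singleton]
      push_neg
      exact ⟨hxx', hxxe⟩
    have hm4 : x' ∉ ({xe} : Finset V) := by simp [hx'xe]
    have hsumT5 : ∑ y ∈ T5, Hf y = Hf u + Hf v + Hf x + Hf x' + Hf xe := by
      rw [hT5, Finset.sum_insert hm1, Finset.sum_insert hm2, Finset.sum_insert hm3,
        Finset.sum_insert hm4, Finset.sum_singleton]
      ring
    have hcardT5 : T5.card = 5 := by
      rw [hT5, Finset.card_insert_of_notMem hm1, Finset.card_insert_of_notMem hm2,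
        Finset.card_insert_of_notMem hm3, Finset.card_insert_of_notMem hm4,
        Finset.card_singleton]
    set k1 := ((leaves G \ T5).filter (fun y => y ∈ F)).card with hk1
    set k2 := ((leaves G \ T5).filter (fun y => ¬ y ∈ F)).card with hk2
    have hk1eq : (leaves G \ T5).filter (fun y => y ∈ F) = F \ {x, x'} := by
      ext t
      simp only [Finset.mem_filter, Finset.mem_sdiff, hT5, Finset.mem_insert,
        Finset.mem_singleton]
      constructor
      · rintro ⟨⟨htL, hnt⟩, htF⟩
        push_neg at hnt
        exact ⟨htF, by push_neg; exact ⟨hnt.2.2.1, hnt.2.2.2.1⟩⟩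
      · rintro ⟨htF, hnt⟩
        push_neg at hnt
        have htF2 := htF
        rw [hF, Finset.mem_filter] at htF2
        obtain ⟨htL, hmt⟩ := htF2
        have htu : t ≠ u := fun h => hcu (by rw [← hmt, h, hmu])
        have htv : t ≠ v := fun h => hcv (by rw [← hmt, h, hmv])
        have htxe : t ≠ xe := fun h => hce (by rw [← hmt, h, hmxe])
        exact ⟨⟨htL, by push_neg; exact ⟨htu, htv, hnt.1, hnt.2, htxe⟩⟩, htF⟩
    have hxx'sub : ({x, x'} : Finset V) ⊆ F := by
      intro t ht
      simp only [Finset.mem_insert, Finset.mem_singleton] at ht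
      rcases ht with rfl | rfl
      · exact hxF
      · exact hx'F
    have hk1val : k1 + 2 = F.card := by
      rw [hk1, hk1eq, Finset.card_sdiff_of_subset hxx'sub]
      have hc2 : ({x, x'} : Finset V).card = 2 := by
        rw [Finset.card_insert_of_notMem (by simp [hxx']), Finset.card_singleton]
      rw [hc2]
      have : 2 ≤ F.card := hF2
      omega
    have hk12 : k1 + k2 + 5 = (leaves G).card := by
      have hpart := Finset.card_filter_add_card_filter_not
        (s := leaves G \ T5) (p := fun y => y ∈ F)
      have hsd := Finset.card_sdiff_add_card_eq_card hT5sub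
      rw [← hk1, ← hk2] at hpart
      omega
    have hrest : ∑ y ∈ leaves G \ T5, Hf y ≤ (k1 : ℝ) * δ2 - (k2 : ℝ) * δ2 := by
      calc ∑ y ∈ leaves G \ T5, Hf y
          ≤ ∑ y ∈ leaves G \ T5, (if y ∈ F then δ2 else -δ2) :=
            Finset.sum_le_sum (fun y hy => hHgen y hy)
        _ = (k1 : ℝ) * δ2 - (k2 : ℝ) * δ2 := by
            rw [Finset.sum_ite, Finset.sum_const, Finset.sum_const, ← hk1, ← hk2,
              nsmul_eq_mul, nsmul_eq_mul]
            ring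
    have hsplitB := Finset.sum_sdiff (f := Hf) hT5sub
    have hexpB : ∑ y ∈ leaves G, Hf y
        = ((leaves G).card : ℝ) * (tdist hT w x x' - tdist hT w u v)
          - (∑ y ∈ leaves G, tdist hT w y x) - (∑ y ∈ leaves G, tdist hT w y x')
          + (∑ y ∈ leaves G, tdist hT w y u) + (∑ y ∈ leaves G, tdist hT w y v) := by
      simp only [hHf]
      rw [Finset.sum_add_distrib, Finset.sum_add_distrib, Finset.sum_sub_distrib,
        Finset.sum_sub_distrib, Finset.sum_sub_distrib]
      simp only [Finset.sum_const, nsmul_eq_mul]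
      ring
    have hc1 : ∑ t ∈ leaves G, tdist hT w x t = ∑ y ∈ leaves G, tdist hT w y x :=
      Finset.sum_congr rfl (fun y _ => tdist_symm hT w x y)
    have hc2 : ∑ t ∈ leaves G, tdist hT w x' t = ∑ y ∈ leaves G, tdist hT w y x' :=
      Finset.sum_congr rfl (fun y _ => tdist_symm hT w x' y)
    have hc3 : ∑ t ∈ leaves G, tdist hT w u t = ∑ y ∈ leaves G, tdist hT w y u :=
      Finset.sum_congr rfl (fun y _ => tdist_symm hT w u y)
    have hc4 : ∑ t ∈ leaves G, tdist hT w v t = ∑ y ∈ leaves G, tdist hT w y v :=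
      Finset.sum_congr rfl (fun y _ => tdist_symm hT w v y)
    have hr1 : ((leaves G).card : ℝ) * tdist hT w x x'
        = (((leaves G).card : ℝ) - 2) * tdist hT w x x' + 2 * tdist hT w x x' := by ring
    have hr2 : ((leaves G).card : ℝ) * tdist hT w u v
        = (((leaves G).card : ℝ) - 2) * tdist hT w u v + 2 * tdist hT w u v := by ring
    have hks : (2 : ℝ) * (F.card : ℝ) ≤ ((leaves G).card : ℝ) := by
      rw [hF]
      exact_mod_cast hsmall
    have hk1c : (k1 : ℝ) + 2 = (F.card : ℝ) := by exact_mod_cast hk1val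
    have hk2c : (k1 : ℝ) + (k2 : ℝ) + 5 = ((leaves G).card : ℝ) := by exact_mod_cast hk12
    have hcoef : (k1 : ℝ) - (k2 : ℝ) ≤ 1 := by linarith
    have hmul : (k1 : ℝ) * δ2 - (k2 : ℝ) * δ2 ≤ δ2 := by nlinarith [hδ0, hcoef]
    have sfinal1 := tdist_symm hT w u c
    have sfinal2 := tdist_symm hT w c x'
    have sfinal3 := tdist_symm hT w e c
    have hδeq : δ2 = tdist hT w x c + tdist hT w c x' - tdist hT w x x' := hδ
    linarith [hB, hexpB, hsplitB, hsumT5, hrest, hmul, hHu, hHv, hHx, hHx', hHxe,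
      hδeq, hE5, hc1, hc2, hc3, hc4, hr1, hr2, hdcepos]

end NJ

open NJ

set_option maxHeartbeats 1600000

/-- Neighbor Joining Theorem: distinct leaves `u, v` minimizing
`q(u,v) = (n−2)·d(u,v) − Σ_x d(u,x) − Σ_x d(v,x)` form a cherry in `T`. -/
theorem stmt10 {V : Type*} [Fintype V] {G : SimpleGraph V} [DecidableRel G.Adj]
    (hT : G.IsTree) (w : Sym2 V → ℝ) (hw : ∀ e ∈ G.edgeSet, 0 < w e)
    (hdeg : ∀ x : V, G.degree x ≠ 2) (hL : 3 ≤ (leaves G).card)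
    (u v : V) (hu : u ∈ leaves G) (hv : v ∈ leaves G) (huv : u ≠ v)
    (hmin : ∀ a ∈ leaves G, ∀ b ∈ leaves G, a ≠ b →
      (((leaves G).card : ℝ) - 2) * tdist hT w u v
          - (∑ x ∈ leaves G, tdist hT w u x)
          - (∑ x ∈ leaves G, tdist hT w v x) ≤
        (((leaves G).card : ℝ) - 2) * tdist hT w a b
          - (∑ x ∈ leaves G, tdist hT w a x)
          - (∑ x ∈ leaves G, tdist hT w b x)) :
    ∃ m : V, G.Adj u m ∧ G.Adj v m := by
  classical
  set p := tpath hT u v with hp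
  have hpp : p.IsPath := tpath_isPath hT u v
  have hud : G.degree u = 1 := by
    have h := hu; simp only [leaves, Finset.mem_filter] at h; exact h.2
  have hvd : G.degree v = 1 := by
    have h := hv; simp only [leaves, Finset.mem_filter] at h; exact h.2
  obtain ⟨c, huc, p₂, hp₂⟩ := Walk.exists_eq_cons_of_ne huv p
  have hthird : ∃ t ∈ leaves G, t ≠ u ∧ t ≠ v := by
    have h1 : 2 ≤ ((leaves G).erase u).card := by
      rw [Finset.card_erase_of_mem hu]; omega
    have h2 : 1 ≤ (((leaves G).erase u).erase v).card := by
      rw [Finset.card_erase_of_mem (Finset.mem_erase.mpr ⟨Ne.symm huv, hv⟩)]; omega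
    obtain ⟨t, ht⟩ := Finset.card_pos.mp
      (show 0 < (((leaves G).erase u).erase v).card by omega)
    rw [Finset.mem_erase, Finset.mem_erase] at ht
    exact ⟨t, ht.2.2, ht.2.1, ht.1⟩
  have hnadj : ¬ G.Adj u v := by
    intro hadj
    obtain ⟨t, htL, htu, htv⟩ := hthird
    have h1 := leaf_dist_decomp hT w hud hadj htu
    have h2 := leaf_dist_decomp hT w hvd hadj.symm htv
    have h3 := tdist_symm hT w u v
    have h4 := tdist_pos hT w hw huv
    linarith
  have hcv : c ≠ v := fun h => hnadj (h ▸ huc)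
  obtain ⟨e, hve, p₃, hp₃⟩ := Walk.exists_eq_cons_of_ne (Ne.symm huv) p.reverse
  have heu : e ≠ u := fun h => hnadj ((h ▸ hve) : G.Adj v u).symm
  have hcu : c ≠ u := huc.ne'
  have hev : e ≠ v := hve.ne'
  by_cases hcee : c = e
  · exact ⟨c, huc, by rw [hcee]; exact hve⟩
  exfalso
  have hcsup : c ∈ p.support := by
    rw [hp₂, Walk.support_cons]; exact List.mem_cons_of_mem _ p₂.start_mem_support
  have hesup : e ∈ p.support := by
    have h : e ∈ p.reverse.support := by
      rw [hp₃, Walk.support_cons]; exact List.mem_cons_of_mem _ p₃.start_mem_support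
    rwa [Walk.support_reverse, List.mem_reverse] at h
  have husup : u ∈ p.support := p.start_mem_support
  have hvsup : v ∈ p.support := p.end_mem_support
  have hdegc : 3 ≤ G.degree c := by
    have h2 := interior_two_nbrs (h := huc) (Q := p₂) (by rw [← hp₂]; exact hpp) hcv
    have h3 := hdeg c
    omega
  have hdege : 3 ≤ G.degree e := by
    have h2 := interior_two_nbrs (h := hve) (Q := p₃) (by rw [← hp₃]; exact hpp.reverse) heu
    have h3 := hdeg e
    omega
  obtain ⟨tc, htc, htcp⟩ := exists_offpath_nbr hT p hpp hcsup hdegc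
  obtain ⟨te, hte, htep⟩ := exists_offpath_nbr hT p hpp hesup hdege
  obtain ⟨xc, hxcdeg, hxcp, hxcdist⟩ := exists_branch_leaf hT w hw p hpp hcsup htc htcp
  obtain ⟨xe, hxedeg, hxep, hxedist⟩ := exists_branch_leaf hT w hw p hpp hesup hte htep
  have hxcL : xc ∈ leaves G := by
    simp only [leaves, Finset.mem_filter]; exact ⟨Finset.mem_univ _, hxcdeg⟩
  have hxeL : xe ∈ leaves G := by
    simp only [leaves, Finset.mem_filter]; exact ⟨Finset.mem_univ _, hxedeg⟩
  choose m r hrpath hmsup hrmin using fun y : V => exists_meet hT p y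
  have hd : ∀ y : V, ∀ s ∈ p.support,
      tdist hT w y s = tdist hT w y (m y) + tdist hT w (m y) s :=
    fun y s hs => meet_dist hT w hpp (hrpath y) (hmsup y) (hrmin y) s hs
  have hmu : m u = u := by
    have h1 := hd u u husup
    have h2 := tdist_self hT w u
    have h4 := tdist_nonneg hT w hw u (m u)
    have h5 := tdist_nonneg hT w hw (m u) u
    exact eq_of_tdist_eq_zero hT w hw (by linarith : tdist hT w (m u) u = 0)
  have hmv : m v = v := by
    have h1 := hd v v hvsup
    have h2 := tdist_self hT w v
    have h4 := tdist_nonneg hT w hw v (m v)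
    have h5 := tdist_nonneg hT w hw (m v) v
    exact eq_of_tdist_eq_zero hT w hw (by linarith : tdist hT w (m v) v = 0)
  have hmxc : m xc = c := by
    have h1 := hxcdist (m xc) (hmsup xc)
    have h2 := hd xc c hcsup
    have h3 := tdist_nonneg hT w hw c (m xc)
    have h4 := tdist_nonneg hT w hw (m xc) c
    have h5 := tdist_symm hT w c (m xc)
    exact eq_of_tdist_eq_zero hT w hw (by linarith : tdist hT w (m xc) c = 0)
  have hmxe : m xe = e := by
    have h1 := hxedist (m xe) (hmsup xe)
    have h2 := hd xe e hesup
    have h3 := tdist_nonneg hT w hw e (m xe)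
    have h4 := tdist_nonneg hT w hw (m xe) e
    have h5 := tdist_symm hT w e (m xe)
    exact eq_of_tdist_eq_zero hT w hw (by linarith : tdist hT w (m xe) e = 0)
  have hdu' : ∀ y ∈ leaves G,
      tdist hT w y u = tdist hT w y (m y) + tdist hT w (m y) u :=
    fun y _ => hd y u husup
  have hdv' : ∀ y ∈ leaves G,
      tdist hT w y v = tdist hT w y (m y) + tdist hT w (m y) v :=
    fun y _ => hd y v hvsup
  have hE3 : ∀ y ∈ leaves G,
      tdist hT w (m y) u + tdist hT w (m y) v = tdist hT w u v := by
    intro y _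
    have h1 := tdist_add_of_mem_support hT w (hmsup y)
    have h2 := tdist_symm hT w u (m y)
    linarith
  have hF2a' : ∀ a ∈ leaves G, ∀ b ∈ leaves G, m a ≠ m b →
      tdist hT w a b = tdist hT w a (m a) + tdist hT w (m a) (m b) + tdist hT w (m b) b :=
    fun a _ b _ hne =>
      F2a hT w hw hpp (hrpath a) (hrpath b) (hmsup a) (hmsup b) (hrmin a) (hrmin b) hne
  have hE5 : tdist hT w u v = tdist hT w u c + tdist hT w c v :=
    tdist_add_of_mem_support hT w hcsup
  have hW8e : tdist hT w u v = tdist hT w u e + tdist hT w e v :=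
    tdist_add_of_mem_support hT w hesup
  have hue : tdist hT w u e = tdist hT w u c + tdist hT w c e :=
    leaf_dist_decomp hT w hud huc heu
  have hE4 : tdist hT w c v = tdist hT w c e + tdist hT w e v := by linarith
  have hE5' : tdist hT w v u = tdist hT w v e + tdist hT w e u := by
    have s1 := tdist_symm hT w v u
    have s2 := tdist_symm hT w v e
    have s3 := tdist_symm hT w e u
    linarith
  have hE4' : tdist hT w e u = tdist hT w e c + tdist hT w c u := by
    have s1 := tdist_symm hT w e u
    have s2 := tdist_symm hT w e c
    have s3 := tdist_symm hT w c u
    linarith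
  have hE3' : ∀ y ∈ leaves G,
      tdist hT w (m y) v + tdist hT w (m y) u = tdist hT w v u := by
    intro y hy
    have h1 := hE3 y hy
    have s1 := tdist_symm hT w u v
    linarith
  have hmin' : ∀ a ∈ leaves G, ∀ b ∈ leaves G, a ≠ b →
      (((leaves G).card : ℝ) - 2) * tdist hT w v u
          - (∑ x ∈ leaves G, tdist hT w v x) - (∑ x ∈ leaves G, tdist hT w u x) ≤
        (((leaves G).card : ℝ) - 2) * tdist hT w a b
          - (∑ x ∈ leaves G, tdist hT w a x) - (∑ x ∈ leaves G, tdist hT w b x) := by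
    intro a ha b hb hab
    have h1 := hmin a ha b hb hab
    have s1 := tdist_symm hT w v u
    have heq : (((leaves G).card : ℝ) - 2) * tdist hT w v u
        = (((leaves G).card : ℝ) - 2) * tdist hT w u v := by rw [s1]
    linarith
  by_cases hsm : 2 * ((leaves G).filter (fun y => m y = c)).card ≤ (leaves G).card
  · exact endgame hT w hw u v c e xc xe m hu hv hxcL hxeL huv hcee hcu hcv heu hev
      hmu hmv hmxc hmxe hdu' hdv' hE3 hF2a' hE5 hE4 hmin hsm
  · have hdisj : Disjoint ((leaves G).filter (fun y => m y = c))
        ((leaves G).filter (fun y => m y = e)) := by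
      rw [Finset.disjoint_left]
      intro t ht1 ht2
      rw [Finset.mem_filter] at ht1 ht2
      exact hcee (ht1.2 ▸ ht2.2 ▸ rfl)
    have hsum : ((leaves G).filter (fun y => m y = c)).card
        + ((leaves G).filter (fun y => m y = e)).card ≤ (leaves G).card := by
      rw [← Finset.card_union_of_disjoint hdisj]
      exact Finset.card_le_card (Finset.union_subset (Finset.filter_subset _ _)
        (Finset.filter_subset _ _))
    have hsm2 : 2 * ((leaves G).filter (fun y => m y = e)).card ≤ (leaves G).card := by
      omega
    exact endgame hT w hw v u e c xe xc m hv hu hxeL hxcL (Ne.symm huv)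
      (fun h => hcee h.symm) hev heu hcv hcu hmv hmu hmxe hmxc hdv' hdu' hE3' hF2a'
      hE5' hE4' hmin' hsm2
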